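/- Let $r \geq 2$ be an integer, $\delta > 0$, and let $\beta : \mathbb{N} \to \mathbb{R}$ satisfy the recursion $\beta(t+1) = (1+\delta)\frac{\beta(t)^r}{r} + \beta(0)$ for all $t \geq 0$. Suppose $x_0 > 0$ satisfies $x_0 = (1+\delta)\frac{x_0^r}{r} + \beta(0)$, and $0 < \xi < 1$. If $0 \leq \beta(0) \leq \beta(t) \leq (1-\xi)x_0$, then $\beta(t+1) \leq (1-\xi')x_0$ where $\xi' = \xi(1-(1-\xi)^r)$, and moreover $0 < \xi' < 1$. -/
import Mathlib


theorem stmt_0 (r : ℕ) (hr : 2 ≤ r) (δ : ℝ) (hδ : 0 < δ) (β : ℕ → ℝ)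
    (hrec : ∀ t, β (t + 1) = (1 + δ) * (β t) ^ r / r + β 0)
    (x0 : ℝ) (hx0 : 0 < x0) (hfix : x0 = (1 + δ) * x0 ^ r / r + β 0)
    (ξ : ℝ) (hξ0 : 0 < ξ) (hξ1 : ξ < 1) (t : ℕ)
    (hβ0 : 0 ≤ β 0) (h0t : β 0 ≤ β t) (ht : β t ≤ (1 - ξ) * x0) :
    β (t + 1) ≤ (1 - ξ * (1 - (1 - ξ) ^ r)) * x0 ∧
      0 < ξ * (1 - (1 - ξ) ^ r) ∧ ξ * (1 - (1 - ξ) ^ r) < 1 := by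
  have hrpos : (0:ℝ) < r := by exact_mod_cast (by omega : 0 < r)
  have h1ξ : (0:ℝ) < 1 - ξ := by linarith
  have hApos : 0 < (1 - ξ) ^ r := pow_pos h1ξ r
  have hA1 : (1 - ξ) ^ r < 1 := pow_lt_one₀ (le_of_lt h1ξ) (by linarith) (by omega)
  have hbt : 0 ≤ β t := le_trans hβ0 h0t
  have hfix' : (1 + δ) * x0 ^ r / r = x0 - β 0 := by linarith
  have hstep : (1 + δ) * (β t) ^ r / r ≤ (1 + δ) * ((1 - ξ) * x0) ^ r / r := by
    gcongr
  have hkey : β (t + 1) ≤ (1 - ξ) ^ r * (x0 - β 0) + β 0 := by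
    rw [hrec t]
    have : (1 + δ) * ((1 - ξ) * x0) ^ r / r = (1 - ξ) ^ r * ((1 + δ) * x0 ^ r / r) := by
      rw [mul_pow]; ring
    rw [this, hfix'] at hstep
    linarith
  have hβ0le : β 0 ≤ (1 - ξ) * x0 := le_trans h0t ht
  refine ⟨?_, ?_, ?_⟩
  · nlinarith [mul_nonneg (by linarith : (0:ℝ) ≤ 1 - (1 - ξ) ^ r)
      (by linarith : (0:ℝ) ≤ (1 - ξ) * x0 - β 0)]
  · nlinarith
  · nlinarith
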